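/- For every slot j ∈ {1,…,m}, every finite set S ⊆ {1,…,m}, and every slot e ∈ {1,…,m} with e ∉ S, one has p^{S ∩ {e}}(j) + p^{S ∪ {e}}(j) ≤ p^S(j) + p^{{e}}(j) (note that S ∩ {e} = ∅ since e ∉ S). -/

import Mathlib

/-- Temporal distance between slots `j` and `e`. -/
def tdist (j e : ℕ) : ℕ := ((j : ℤ) - (e : ℤ)).natAbs

/-- Padded `k`-NN distance sum `I_k^S(j)`. -/
def Ik (m k : ℕ) (S : Finset ℕ) (j : ℕ) : ℕ :=
  if k ≤ S.card then
    (((S.val.map (fun e => tdist j e)).sort (· ≤ ·)).take k).sum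
  else
    (S.val.map (fun e => tdist j e)).sum + (k - S.card) * m

/-- Interpolation error ratio `ρ^S(j)`. -/
noncomputable def rho (m k : ℕ) (S : Finset ℕ) (j : ℕ) : ℝ :=
  if j ∈ S then 0 else (Ik m k S j : ℝ) / ((k : ℝ) * (m : ℝ))

/-- Subtask finishing probability `p^S(j)`. -/
noncomputable def prob (m k : ℕ) (S : Finset ℕ) (j : ℕ) : ℝ :=
  (1 / (m : ℝ)) * (1 - rho m k S j)

/-- Task quality `q(S)` (note `Real.logb 2 0 = 0`, so the convention
`0 · log₂ 0 = 0` holds definitionally). -/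
noncomputable def quality (m k : ℕ) (S : Finset ℕ) : ℝ :=
  ∑ j ∈ Finset.Icc 1 m, -(prob m k S j * Real.logb 2 (prob m k S j))

/- ### Auxiliary lemmas -/

lemma tdist_le {m j e : ℕ} (hj : j ∈ Finset.Icc 1 m) (he : e ∈ Finset.Icc 1 m) :
    tdist j e ≤ m := by
  simp only [Finset.mem_Icc] at hj he
  unfold tdist
  omega

lemma sum_take_succ_le (m : ℕ) (L : List ℕ) (h : ∀ x ∈ L, x ≤ m) (n : ℕ) :
    (L.take (n + 1)).sum ≤ (L.take n).sum + m := by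
  rcases lt_or_ge n L.length with hn | hn
  · rw [List.sum_take_succ L n hn]
    exact Nat.add_le_add_left (h _ (L.getElem_mem hn)) _
  · rw [List.take_of_length_le hn, List.take_of_length_le (by omega)]
    omega

lemma take_sum_orderedInsert (m d : ℕ) (hd : d ≤ m) :
    ∀ (L : List ℕ), (∀ x ∈ L, x ≤ m) → ∀ k, k ≤ L.length →
      (L.take k).sum + d ≤ m + ((L.orderedInsert (· ≤ ·) d).take k).sum := by
  intro L
  induction L with
  | nil =>
    intro _ k hk
    simp at hk
    subst hk
    simpa using hd
  | cons a L ih =>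
    intro hb k hk
    have ha : a ≤ m := hb a (by simp)
    have hbL : ∀ x ∈ L, x ≤ m := fun x hx => hb x (by simp [hx])
    by_cases hda : d ≤ a
    · simp only [List.orderedInsert, if_pos hda]
      cases k with
      | zero => simpa using hd
      | succ k =>
        have ht := sum_take_succ_le m (a :: L) hb k
        simp only [List.take_succ_cons, List.sum_cons] at ht ⊢
        omega
    · simp only [List.orderedInsert, if_neg hda]
      cases k with
      | zero => simpa using hd
      | succ k =>
        rw [List.take_succ_cons, List.take_succ_cons, List.sum_cons, List.sum_cons]
        have := ih hbL k (by simpa using hk)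
        omega

lemma sort_cons (d : ℕ) (M : Multiset ℕ) :
    (d ::ₘ M).sort (· ≤ ·) = (M.sort (· ≤ ·)).orderedInsert (· ≤ ·) d := by
  refine List.Perm.eq_of_pairwise' (Multiset.pairwise_sort _ _)
    (List.Pairwise.orderedInsert d _ (Multiset.pairwise_sort _ _)) ?_
  refine List.Perm.trans ?_ (List.perm_orderedInsert _ d _).symm
  rw [← Multiset.coe_eq_coe, Multiset.sort_eq, ← Multiset.cons_coe, Multiset.sort_eq]

lemma mem_dists_le {m j : ℕ} (hj : j ∈ Finset.Icc 1 m) {S : Finset ℕ}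
    (hS : S ⊆ Finset.Icc 1 m) :
    ∀ x ∈ S.val.map (fun e => tdist j e), x ≤ m := by
  intro x hx
  simp only [Multiset.mem_map] at hx
  obtain ⟨e, heS, rfl⟩ := hx
  exact tdist_le hj (hS heS)

lemma Ik_le_km {m k j : ℕ} (hj : j ∈ Finset.Icc 1 m) {S : Finset ℕ}
    (hS : S ⊆ Finset.Icc 1 m) : Ik m k S j ≤ k * m := by
  have hb := mem_dists_le hj hS
  unfold Ik
  split
  · calc ((((S.val.map (fun e => tdist j e)).sort (· ≤ ·)).take k)).sum
        ≤ (((S.val.map (fun e => tdist j e)).sort (· ≤ ·)).take k).length • m := by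
          apply List.sum_le_card_nsmul
          intro x hx
          exact hb x (by
            have := List.mem_of_mem_take hx
            rwa [Multiset.mem_sort] at this)
      _ ≤ k * m := by
          rw [smul_eq_mul]
          exact Nat.mul_le_mul_right m (by rw [List.length_take]; omega)
  · rename_i h
    have h1 : (S.val.map (fun e => tdist j e)).sum ≤ S.card * m := by
      have h2 := Multiset.sum_le_card_nsmul (S.val.map (fun e => tdist j e)) m hb
      rw [Multiset.card_map, smul_eq_mul] at h2
      exact h2
    have hck : S.card ≤ k := by omega
    calc (S.val.map (fun e => tdist j e)).sum + (k - S.card) * m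
        ≤ S.card * m + (k - S.card) * m := by omega
      _ = k * m := by rw [← Nat.add_mul]; congr 1; omega

lemma Ik_empty {m k j : ℕ} (hk : 1 ≤ k) : Ik m k (∅ : Finset ℕ) j = k * m := by
  unfold Ik
  rw [if_neg (by simp; omega)]
  simp

lemma Ik_singleton {m k j e : ℕ} (hk : 1 ≤ k) :
    Ik m k ({e} : Finset ℕ) j = tdist j e + (k - 1) * m := by
  unfold Ik
  have hc : ({e} : Finset ℕ).card = 1 := Finset.card_singleton e
  rw [hc]
  have hv : ({e} : Finset ℕ).val = e ::ₘ 0 := rfl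
  rw [hv, Multiset.map_cons, Multiset.map_zero]
  by_cases h1 : k ≤ 1
  · have hk1 : k = 1 := by omega
    subst hk1
    rw [if_pos le_rfl, sort_cons, Multiset.sort_zero]
    simp [List.orderedInsert]
  · rw [if_neg h1]
    simp

lemma Ik_key {m k j e : ℕ} (hj : j ∈ Finset.Icc 1 m) (he : e ∈ Finset.Icc 1 m)
    {S : Finset ℕ} (hS : S ⊆ Finset.Icc 1 m) (heS : e ∉ S) :
    Ik m k S j + tdist j e ≤ m + Ik m k (insert e S) j := by
  have hins : (insert e S).val = e ::ₘ S.val := Finset.insert_val_of_notMem heS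
  have hcard : (insert e S).card = S.card + 1 := Finset.card_insert_of_notMem heS
  have hb : ∀ x ∈ S.val.map (fun e => tdist j e), x ≤ m := mem_dists_le hj hS
  have hd : tdist j e ≤ m := tdist_le hj he
  unfold Ik
  rw [hins, hcard, Multiset.map_cons]
  by_cases h1 : k ≤ S.card
  · rw [if_pos h1, if_pos (by omega), sort_cons]
    exact take_sum_orderedInsert m _ hd _
      (fun x hx => hb x ((Multiset.mem_sort _).mp hx)) k
      (by rw [Multiset.length_sort, Multiset.card_map]; exact h1)
  · by_cases h2 : k ≤ S.card + 1
    · have hk1 : k = S.card + 1 := by omega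
      rw [if_neg h1, if_pos h2]
      have hlen : ((tdist j e ::ₘ S.val.map (fun e => tdist j e)).sort (· ≤ ·)).length
          = S.card + 1 := by
        rw [Multiset.length_sort, Multiset.card_cons, Multiset.card_map]; rfl
      rw [List.take_of_length_le (by omega)]
      have hsum : ((tdist j e ::ₘ S.val.map (fun e => tdist j e)).sort (· ≤ ·)).sum
          = tdist j e + (S.val.map (fun e => tdist j e)).sum := by
        rw [← Multiset.sum_coe, Multiset.sort_eq, Multiset.sum_cons]
      rw [hsum]
      have : k - S.card = 1 := by omega
      rw [this]
      omega
    · rw [if_neg h1, if_neg (by omega), Multiset.sum_cons]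
      have h3 : k - S.card = (k - (S.card + 1)) + 1 := by omega
      rw [h3, Nat.add_mul, one_mul]
      omega

lemma rho_nonneg {m k : ℕ} (S : Finset ℕ) (j : ℕ) : 0 ≤ rho m k S j := by
  unfold rho
  split
  · exact le_refl 0
  · positivity

lemma rho_le_one {m k j : ℕ} (hm : 2 ≤ m) (hk : 1 ≤ k) (hj : j ∈ Finset.Icc 1 m)
    {S : Finset ℕ} (hS : S ⊆ Finset.Icc 1 m) : rho m k S j ≤ 1 := by
  have hkm : (0:ℝ) < (k:ℝ) * (m:ℝ) := by
    have h1 : (0:ℝ) < (k:ℝ) := by exact_mod_cast hk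
    have h2 : (0:ℝ) < (m:ℝ) := by exact_mod_cast (by omega : 0 < m)
    exact mul_pos h1 h2
  unfold rho
  split
  · exact zero_le_one
  · rw [div_le_one hkm]
    exact_mod_cast Ik_le_km hj hS

/-- Single-element submodularity inequality for the finishing probability. -/
theorem prob_submodular_single (m k : ℕ) (hm : 2 ≤ m) (hk : 1 ≤ k)
    (j : ℕ) (hj : j ∈ Finset.Icc 1 m)
    (S : Finset ℕ) (hS : S ⊆ Finset.Icc 1 m)
    (e : ℕ) (he : e ∈ Finset.Icc 1 m) (heS : e ∉ S) :
    prob m k (S ∩ {e}) j + prob m k (S ∪ {e}) j ≤ prob m k S j + prob m k {e} j := by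
  have hm0 : (0:ℝ) < (m:ℝ) := by
    have : 0 < m := by omega
    exact_mod_cast this
  have hk0 : (0:ℝ) < (k:ℝ) := by exact_mod_cast hk
  have hkm : (0:ℝ) < (k:ℝ) * (m:ℝ) := by positivity
  have hun : S ∪ {e} = insert e S := by ext x; simp [or_comm]
  rw [Finset.inter_singleton_of_notMem heS, hun]
  have hempty : prob m k (∅ : Finset ℕ) j = 0 := by
    unfold prob rho
    rw [if_neg (Finset.notMem_empty j), Ik_empty hk]
    push_cast
    rw [div_self (ne_of_gt hkm)]
    ring
  rw [hempty, zero_add]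
  -- key inequality on rho
  have hkey : rho m k S j + rho m k {e} j ≤ 1 + rho m k (insert e S) j := by
    by_cases hjS : j ∈ S
    · rw [rho, if_pos hjS]
      have h1 := rho_le_one hm hk hj (fun x hx => by
        rw [Finset.mem_singleton] at hx
        subst hx
        exact he : ({e} : Finset ℕ) ⊆ Finset.Icc 1 m)
      have h2 := rho_nonneg (m := m) (k := k) (insert e S) j
      linarith
    · by_cases hje : j = e
      · have hj1 : j ∈ ({e} : Finset ℕ) := by simp [hje]
        have hj2 : j ∈ insert e S := by simp [hje]
        have hr1 : rho m k {e} j = 0 := by unfold rho; rw [if_pos hj1]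
        have hr2 : rho m k (insert e S) j = 0 := by unfold rho; rw [if_pos hj2]
        have h1 := rho_le_one hm hk hj hS
        have h0 := rho_nonneg (m := m) (k := k) S j
        rw [hr1, hr2]
        linarith
      · have hjins : j ∉ insert e S := by simp [hje, hjS]
        have hj1 : j ∉ ({e} : Finset ℕ) := by simp [hje]
        rw [rho, if_neg hjS, rho, if_neg hj1, rho, if_neg hjins]
        have hnat : Ik m k S j + Ik m k ({e} : Finset ℕ) j
            ≤ k * m + Ik m k (insert e S) j := by
          have h1 := Ik_key hj he hS heS (k := k)
          rw [Ik_singleton hk]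
          have h2 : k * m = (k - 1) * m + m := by
            have : k - 1 + 1 = k := by omega
            calc k * m = (k - 1 + 1) * m := by rw [this]
              _ = (k - 1) * m + m := by rw [Nat.add_mul, one_mul]
          omega
        have hcast : (Ik m k S j : ℝ) + (Ik m k ({e} : Finset ℕ) j : ℝ)
            ≤ (k:ℝ) * (m:ℝ) + (Ik m k (insert e S) j : ℝ) := by
          exact_mod_cast hnat
        rw [← add_div, div_le_iff₀ hkm]
        have hexp : (1 + (Ik m k (insert e S) j : ℝ) / ((k:ℝ)*(m:ℝ))) * ((k:ℝ)*(m:ℝ))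
            = (k:ℝ)*(m:ℝ) + (Ik m k (insert e S) j : ℝ) := by
          field_simp
        rw [hexp]
        linarith
  unfold prob
  rw [← mul_add]
  apply mul_le_mul_of_nonneg_left _ (by positivity)
  linarith
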